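/- Let U(y) = (1 + |y|²/24)⁻² and Z(y) = 2U(y) + y·∇U(y) on ℝ⁶. Then there exist C > 0 and r₀ > 0 such that for all r ≥ r₀: | ∫_{{y ∈ ℝ⁶ : |y| > r}} Z(y)² dy − 2 · 24⁴ π³ r⁻² | ≤ C r⁻⁴. -/

import Mathlib

open MeasureTheory

noncomputable section

/-- `ℝ⁶` as a Euclidean space. -/
abbrev E6 : Type := EuclideanSpace ℝ (Fin 6)

/-- The Aubin–Talenti bubble on `ℝ⁶`: `U(y) = (1 + |y|²/24)⁻²`. -/
def Ubub (y : E6) : ℝ := ((1 + ‖y‖ ^ 2 / 24) ^ 2)⁻¹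

/-- The scaling kernel `Z(y) = 2U(y) + y·∇U(y) = (2 − |y|²/12)(1 + |y|²/24)⁻³`. -/
def Zker (y : E6) : ℝ := (2 - ‖y‖ ^ 2 / 12) * ((1 + ‖y‖ ^ 2 / 24) ^ 3)⁻¹

open Set Filter

/-- The radial profile of `Z²`. -/
def fZ (t : ℝ) : ℝ := ((2 - t ^ 2 / 12) * ((1 + t ^ 2 / 24) ^ 3)⁻¹) ^ 2

/-- An explicit antiderivative of `t ↦ t⁵ fZ(t)`. -/
def GG (t : ℝ) : ℝ := -(2 * 24 ^ 3) *
  ((1 + t ^ 2 / 24)⁻¹ - 3 * ((1 + t ^ 2 / 24) ^ 2)⁻¹ + 13 / 3 * ((1 + t ^ 2 / 24) ^ 3)⁻¹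
    - 3 * ((1 + t ^ 2 / 24) ^ 4)⁻¹ + 4 / 5 * ((1 + t ^ 2 / 24) ^ 5)⁻¹)

lemma hasDerivAt_GG (x : ℝ) : HasDerivAt GG (x ^ 5 * fZ x) x := by
  have ha : (0:ℝ) < 1 + x ^ 2 / 24 := by positivity
  have hane : (1 + x ^ 2 / 24) ≠ 0 := ne_of_gt ha
  have hu : HasDerivAt (fun t : ℝ => 1 + t ^ 2 / 24) (x / 12) x := by
    have h := ((hasDerivAt_pow 2 x).div_const 24).const_add (1 : ℝ)
    refine h.congr_deriv ?_
    norm_num; ring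
  have h1 := hu.inv hane
  have h2 := (hu.pow 2).inv (pow_ne_zero 2 hane)
  have h3 := (hu.pow 3).inv (pow_ne_zero 3 hane)
  have h4 := (hu.pow 4).inv (pow_ne_zero 4 hane)
  have h5 := (hu.pow 5).inv (pow_ne_zero 5 hane)
  have h := (((((h1.sub (h2.const_mul (3:ℝ))).add (h3.const_mul (13/3 : ℝ))).sub
      (h4.const_mul (3:ℝ))).add (h5.const_mul (4/5 : ℝ))).const_mul (-(2 * 24 ^ 3) : ℝ))
  refine HasDerivAt.congr_deriv (f := GG) h ?_
  simp only [fZ, Pi.pow_apply]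
  field_simp
  ring

lemma tendsto_GG : Tendsto GG atTop (nhds 0) := by
  have hu : Tendsto (fun t : ℝ => 1 + t ^ 2 / 24) atTop atTop := by
    apply tendsto_atTop_add_const_left
    exact (tendsto_pow_atTop (two_ne_zero)).atTop_div_const (by norm_num)
  have hk : ∀ k : ℕ, k ≠ 0 → Tendsto (fun t : ℝ => ((1 + t ^ 2 / 24) ^ k)⁻¹) atTop (nhds 0) := by
    intro k hk
    exact ((tendsto_pow_atTop hk).comp hu).inv_tendsto_atTop
  have hk1 : Tendsto (fun t : ℝ => (1 + t ^ 2 / 24)⁻¹) atTop (nhds 0) := by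
    simpa using hk 1 one_ne_zero
  have h := ((((hk1.sub ((hk 2 two_ne_zero).const_mul (3:ℝ))).add
      ((hk 3 three_ne_zero).const_mul (13/3 : ℝ))).sub ((hk 4 (by norm_num)).const_mul (3:ℝ))).add
      ((hk 5 (by norm_num)).const_mul (4/5 : ℝ))).const_mul (-(2 * 24 ^ 3) : ℝ)
  have h' : Tendsto GG atTop
      (nhds (-(2 * 24 ^ 3) * (0 - 3 * 0 + 13 / 3 * 0 - 3 * 0 + 4 / 5 * 0))) := h
  simpa using h'

lemma integral_Ioi_fZ {r : ℝ} (hr : 0 < r) :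
    ∫ x in Ioi r, x ^ 5 * fZ x = -GG r := by
  have h := integral_Ioi_of_hasDerivAt_of_nonneg' (g := GG) (g' := fun x => x ^ 5 * fZ x)
    (fun x _ => hasDerivAt_GG x)
    (fun x hx => by
      have hx0 : 0 < x := lt_trans hr hx
      have : (0:ℝ) ≤ fZ x := sq_nonneg _
      positivity)
    tendsto_GG
  simpa using h

lemma tail_integral_eq {r : ℝ} (hr0 : 0 < r) :
    (∫ y in {y : E6 | r < ‖y‖}, (Zker y) ^ 2) = Real.pi ^ 3 * (-GG r) := by
  have hS : MeasurableSet {y : E6 | r < ‖y‖} :=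
    (isOpen_lt continuous_const continuous_norm).measurableSet
  have h1 : (∫ y in {y : E6 | r < ‖y‖}, (Zker y) ^ 2)
      = ∫ y : E6, (Ioi r).indicator fZ ‖y‖ := by
    rw [← integral_indicator hS]
    refine integral_congr_ae (Filter.Eventually.of_forall fun y => ?_)
    by_cases h : r < ‖y‖ <;> simp [Set.indicator, h, fZ, Zker, Set.mem_setOf_eq]
  rw [h1, integral_fun_norm_addHaar (volume : Measure E6) ((Ioi r).indicator fZ)]
  have hdim : Module.finrank ℝ E6 = 6 := by simp [finrank_euclideanSpace]
  rw [hdim]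
  have hvol : (volume (Metric.ball (0 : E6) 1)).toReal = Real.pi ^ 3 / 6 := by
    rw [EuclideanSpace.volume_ball]
    have hg : Real.Gamma ((Fintype.card (Fin 6) : ℝ) / 2 + 1) = 6 := by
      have : ((Fintype.card (Fin 6) : ℝ) / 2 + 1) = ((3 : ℕ) : ℝ) + 1 := by
        norm_num
      rw [this, Real.Gamma_nat_eq_factorial]; norm_num [Nat.factorial]
    rw [hg]
    have hs : Real.sqrt Real.pi ^ Fintype.card (Fin 6) = Real.pi ^ 3 := by
      have : Real.sqrt Real.pi ^ 2 = Real.pi := Real.sq_sqrt Real.pi_pos.le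
      simp only [Fintype.card_fin]
      calc Real.sqrt Real.pi ^ 6 = (Real.sqrt Real.pi ^ 2) ^ 3 := by ring
        _ = Real.pi ^ 3 := by rw [this]
    rw [hs]
    simp [ENNReal.toReal_ofReal (by positivity : (0:ℝ) ≤ Real.pi ^ 3 / 6)]
  rw [measureReal_def, hvol]
  have h2 : (∫ y in Ioi (0:ℝ), y ^ (6 - 1) • (Ioi r).indicator fZ y)
      = ∫ y in Ioi r, y ^ 5 * fZ y := by
    have : ∀ y : ℝ, y ^ (6 - 1) • (Ioi r).indicator fZ y
        = (Ioi r).indicator (fun y => y ^ 5 * fZ y) y := by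
      intro y
      by_cases h : y ∈ Ioi r <;> simp [h]
    simp_rw [this]
    rw [setIntegral_indicator measurableSet_Ioi]
    congr 1
    rw [Set.Ioi_inter_Ioi, max_eq_right hr0.le]
  rw [h2, integral_Ioi_fZ hr0]
  simp only [nsmul_eq_mul, smul_eq_mul]
  ring

/-- the tail integral of `Z²` outside the ball of radius `r` equals
`2 · 24⁴ π³ r⁻²` up to an error `O(r⁻⁴)`. -/
theorem tail_integral_Z_sq :
    ∃ C > 0, ∃ r₀ > 0, ∀ r ≥ r₀,
      |(∫ y in {y : E6 | r < ‖y‖}, (Zker y) ^ 2) - 2 * 24 ^ 4 * Real.pi ^ 3 / r ^ 2|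
        ≤ C / r ^ 4 := by
  refine ⟨2 * 24 ^ 3 * 576 * 13 * Real.pi ^ 3, by positivity, 1, one_pos, fun r hr => ?_⟩
  have hr0 : (0:ℝ) < r := lt_of_lt_of_le one_pos hr
  have hrne : r ≠ 0 := ne_of_gt hr0
  have hI := tail_integral_eq (r := r) hr0
  have ha : (0:ℝ) < 1 + r ^ 2 / 24 := by positivity
  set b : ℝ := (1 + r ^ 2 / 24)⁻¹ with hbdef
  have hb_pos : 0 < b := by positivity
  have hbe : b * (1 + r ^ 2 / 24) = 1 := inv_mul_cancel₀ (ne_of_gt ha)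
  have e1 : b * r ^ 2 = 24 - 24 * b := by linear_combination 24 * hbe
  have e2 : b * r ^ 4 = 24 * r ^ 2 - 24 * (b * r ^ 2) := by
    linear_combination 24 * r ^ 2 * hbe
  have hbnn : (0:ℝ) ≤ b * r ^ 2 := by positivity
  have hb1 : b ≤ 1 := by linarith
  have hr2 : (0:ℝ) < r ^ 2 := by positivity
  have hr4 : (0:ℝ) < r ^ 4 := by positivity
  have hbr : b ≤ 24 / r ^ 2 := by
    rw [le_div_iff₀ hr2]; linarith
  have hbd : 24 / r ^ 2 - b ≤ 576 / r ^ 4 := by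
    have key : 24 / r ^ 2 - b = (24 * r ^ 2 - b * r ^ 4) / r ^ 4 := by
      field_simp
    rw [key, div_le_div_iff₀ hr4 hr4]
    nlinarith [hb_pos.le]
  have hb2 : b ^ 2 ≤ 576 / r ^ 4 := by
    have h := mul_le_mul hbr hbr hb_pos.le (by positivity : (0:ℝ) ≤ 24 / r ^ 2)
    calc b ^ 2 = b * b := by ring
      _ ≤ (24 / r ^ 2) * (24 / r ^ 2) := h
      _ = 576 / r ^ 4 := by field_simp; ring
  have hb3 : b ^ 3 ≤ 576 / r ^ 4 :=
    le_trans (pow_le_pow_of_le_one hb_pos.le hb1 (by norm_num : 2 ≤ 3)) hb2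
  have hb4 : b ^ 4 ≤ 576 / r ^ 4 :=
    le_trans (pow_le_pow_of_le_one hb_pos.le hb1 (by norm_num : 2 ≤ 4)) hb2
  have hb5 : b ^ 5 ≤ 576 / r ^ 4 :=
    le_trans (pow_le_pow_of_le_one hb_pos.le hb1 (by norm_num : 2 ≤ 5)) hb2
  have hGGr : -GG r = 2 * 24 ^ 3 *
      (b - 3 * b ^ 2 + 13 / 3 * b ^ 3 - 3 * b ^ 4 + 4 / 5 * b ^ 5) := by
    simp only [GG, hbdef, ← inv_pow]
    ring
  have habs : Real.pi ^ 3 * (-GG r) - 2 * 24 ^ 4 * Real.pi ^ 3 / r ^ 2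
      = Real.pi ^ 3 * (2 * 24 ^ 3 *
        (b - 3 * b ^ 2 + 13 / 3 * b ^ 3 - 3 * b ^ 4 + 4 / 5 * b ^ 5) - 2 * 24 ^ 4 / r ^ 2) := by
    rw [hGGr]; ring
  rw [hI, habs, abs_mul, abs_of_nonneg (by positivity : (0:ℝ) ≤ Real.pi ^ 3)]
  have key : ∀ p q : ℝ, b ≤ p → p - b ≤ q → b ^ 2 ≤ q → b ^ 3 ≤ q → b ^ 4 ≤ q → b ^ 5 ≤ q →
      |2 * 24 ^ 3 * (b - 3 * b ^ 2 + 13 / 3 * b ^ 3 - 3 * b ^ 4 + 4 / 5 * b ^ 5)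
        - 2 * 24 ^ 3 * p| ≤ 2 * 24 ^ 3 * 13 * q := by
    intro p q h1' h2' h3' h4' h5' h6'
    have n2 : (0:ℝ) ≤ b ^ 2 := pow_nonneg hb_pos.le 2
    have n3 : (0:ℝ) ≤ b ^ 3 := pow_nonneg hb_pos.le 3
    have n4 : (0:ℝ) ≤ b ^ 4 := pow_nonneg hb_pos.le 4
    have n5 : (0:ℝ) ≤ b ^ 5 := pow_nonneg hb_pos.le 5
    rw [abs_le]
    constructor <;> linarith
  have hd : |2 * 24 ^ 3 * (b - 3 * b ^ 2 + 13 / 3 * b ^ 3 - 3 * b ^ 4 + 4 / 5 * b ^ 5)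
      - 2 * 24 ^ 4 / r ^ 2| ≤ 2 * 24 ^ 3 * 576 * 13 / r ^ 4 := by
    have h := key (24 / r ^ 2) (576 / r ^ 4) hbr hbd hb2 hb3 hb4 hb5
    rw [show (2 * 24 ^ 4 / r ^ 2 : ℝ) = 2 * 24 ^ 3 * (24 / r ^ 2) from by ring]
    calc _ ≤ (2 * 24 ^ 3 * 13 * (576 / r ^ 4) : ℝ) := h
      _ = 2 * 24 ^ 3 * 576 * 13 / r ^ 4 := by ring
  calc Real.pi ^ 3 * |2 * 24 ^ 3 * (b - 3 * b ^ 2 + 13 / 3 * b ^ 3 - 3 * b ^ 4 + 4 / 5 * b ^ 5)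
        - 2 * 24 ^ 4 / r ^ 2|
      ≤ Real.pi ^ 3 * (2 * 24 ^ 3 * 576 * 13 / r ^ 4) :=
        mul_le_mul_of_nonneg_left hd (by positivity)
    _ = 2 * 24 ^ 3 * 576 * 13 * Real.pi ^ 3 / r ^ 4 := by ring
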